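/- Let G=(V,E) be a d-manifold with d even. Then for every vertex x, the curvature satisfies K(x) = 1 − E[χ(M_f(x))]/2, where the expectation is over uniformly random bijections f:V→{1,...,|V|}. -/

import Mathlib

open scoped Classical

/-- A finite simple graph: a finite vertex set together with a symmetric, irreflexive
adjacency relation supported on the vertex set. -/
structure FGraph (V : Type) where
  verts : Finset V
  Adj : V → V → Prop
  symm : ∀ {a b}, Adj a b → Adj b a
  loopless : ∀ a, ¬ Adj a a
  mem_of_adj : ∀ {a b}, Adj a b → a ∈ verts

namespace FGraph

variable {V W : Type}

/-- The subgraph induced on the vertices satisfying `P`. -/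
noncomputable def induce (G : FGraph V) (P : V → Prop) : FGraph V where
  verts := G.verts.filter P
  Adj a b := G.Adj a b ∧ P a ∧ P b
  symm h := ⟨G.symm h.1, h.2.2, h.2.1⟩
  loopless a h := G.loopless a h.1
  mem_of_adj h := Finset.mem_filter.mpr ⟨G.mem_of_adj h.1, h.2.1⟩

/-- The unit sphere of a vertex: the subgraph induced on its neighbors. -/
noncomputable def unitSphere (G : FGraph V) (v : V) : FGraph V :=
  G.induce (fun w => G.Adj v w)

/-- The graph with the vertex `v` (and its edges) removed. -/
noncomputable def erase (G : FGraph V) (v : V) : FGraph V :=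
  G.induce (fun w => w ≠ v)

/-- Inductive definition of contractibility: the one-point graph is contractible, and a
graph is contractible if some vertex has a contractible unit sphere and contractible
complement. -/
inductive Contractible : FGraph V → Prop
  | single (G : FGraph V) (v : V) (h : G.verts = {v}) : Contractible G
  | step (G : FGraph V) (v : V) (hv : v ∈ G.verts)
      (h1 : Contractible (G.unitSphere v)) (h2 : Contractible (G.erase v)) :
      Contractible G

mutual
  /-- `G` is a `d`-sphere: the empty graph is the `(-1)`-sphere, and a `d`-manifold is a
  `d`-sphere if removing some vertex renders it contractible. -/
  inductive IsSphere : ℤ → FGraph V → Prop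
    | empty (G : FGraph V) (h : G.verts = ∅) : IsSphere (-1) G
    | punctured (d : ℤ) (G : FGraph V) (hm : IsManifold d G) (v : V) (hv : v ∈ G.verts)
        (hc : Contractible (G.erase v)) : IsSphere d G
  /-- For `d ≥ 0`, `G` is a `d`-manifold iff every unit sphere is a `(d-1)`-sphere. -/
  inductive IsManifold : ℤ → FGraph V → Prop
    | intro (d : ℤ) (hd : 0 ≤ d) (G : FGraph V)
        (h : ∀ v ∈ G.verts, IsSphere (d - 1) (G.unitSphere v)) : IsManifold d G
end

/-- A simplex of `G`: the vertex set of a complete subgraph. -/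
def IsSimplex (G : FGraph V) (x : Finset V) : Prop :=
  x.Nonempty ∧ ↑x ⊆ G.verts ∧ ∀ a ∈ x, ∀ b ∈ x, a ≠ b → G.Adj a b

/-- The Barycentric refinement: vertices are the simplices of `G`, two being adjacent iff
one is strictly contained in the other. -/
noncomputable def barycentric (G : FGraph V) : FGraph (Finset V) where
  verts := G.verts.powerset.filter (fun x => G.IsSimplex x)
  Adj x y := G.IsSimplex x ∧ G.IsSimplex y ∧ (x ⊂ y ∨ y ⊂ x)
  symm h := ⟨h.2.1, h.1, h.2.2.symm⟩
  loopless x h := by rcases h.2.2 with h' | h' <;> exact (ssubset_irrefl x h')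
  mem_of_adj h := Finset.mem_filter.mpr ⟨Finset.mem_powerset.mpr h.1.2.1, h.1⟩

/-- Number of simplices of `G` with exactly `j` vertices (so `numSimplices G (k+1)` is
the `f`-vector entry `f_k(G)`). -/
noncomputable def numSimplices (G : FGraph V) (j : ℕ) : ℕ :=
  (G.verts.powerset.filter (fun x => G.IsSimplex x ∧ x.card = j)).card

/-- Euler characteristic `χ(G) = Σ_{k ≥ 0} (-1)^k f_k(G)`, where `f_k` counts the
simplices with `k+1` vertices. -/
noncomputable def euler (G : FGraph V) : ℤ :=
  ∑ k ∈ Finset.range G.verts.card, (-1 : ℤ) ^ k * G.numSimplices (k + 1)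

/-- The level set `{f = c}`: the subgraph of the Barycentric refinement induced by the
simplices on which `f - c` changes sign. -/
noncomputable def levelSet (G : FGraph V) (f : V → ℝ) (c : ℝ) : FGraph (Finset V) :=
  G.barycentric.induce (fun x => (∃ a ∈ x, f a - c < 0) ∧ (∃ b ∈ x, 0 < f b - c))

/-- Graph isomorphism. -/
def Iso (G : FGraph V) (H : FGraph W) : Prop :=
  ∃ φ : V → W, Set.BijOn φ ↑G.verts ↑H.verts ∧
    ∀ a ∈ G.verts, ∀ b ∈ G.verts, (G.Adj a b ↔ H.Adj (φ a) (φ b))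

/-- Zykov join of two graphs: disjoint union plus all edges between the two parts. -/
noncomputable def join (G : FGraph V) (H : FGraph W) : FGraph (V ⊕ W) where
  verts := G.verts.disjSum H.verts
  Adj a b :=
    match a, b with
    | .inl a, .inl b => G.Adj a b
    | .inr a, .inr b => H.Adj a b
    | .inl a, .inr b => a ∈ G.verts ∧ b ∈ H.verts
    | .inr a, .inl b => b ∈ G.verts ∧ a ∈ H.verts
  symm {a b} h := by
    cases a <;> cases b <;> simp_all <;> first | exact G.symm h | exact H.symm h
  loopless a h := by
    cases a <;> simp_all <;> first | exact G.loopless _ h | exact H.loopless _ h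
  mem_of_adj {a b} h := by
    cases a <;> cases b <;> simp_all [Finset.mem_disjSum] <;>
      first | exact G.mem_of_adj h | exact H.mem_of_adj h

/-- Union of two graphs on the same vertex type. -/
noncomputable def union (G H : FGraph V) : FGraph V where
  verts := G.verts ∪ H.verts
  Adj a b := G.Adj a b ∨ H.Adj a b
  symm h := h.imp G.symm H.symm
  loopless a h := h.elim (G.loopless a) (H.loopless a)
  mem_of_adj h :=
    h.elim (fun h' => Finset.mem_union_left _ (G.mem_of_adj h'))
      (fun h' => Finset.mem_union_right _ (H.mem_of_adj h'))

/-- A `d`-ball: a graph of the form `S - v` for a `d`-sphere `S` and a vertex `v` of `S`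
(up to graph isomorphism). -/
def IsBall (d : ℤ) (H : FGraph W) : Prop :=
  ∃ (S : FGraph ℕ) (v : ℕ), IsSphere d S ∧ v ∈ S.verts ∧ Iso H (S.erase v)

/-- A `d`-manifold with boundary: every unit sphere is a `(d-1)`-sphere or a `(d-1)`-ball. -/
def IsManifoldWithBoundary (d : ℤ) (G : FGraph V) : Prop :=
  ∀ v ∈ G.verts, IsSphere (d - 1) (G.unitSphere v) ∨ IsBall (d - 1) (G.unitSphere v)

/-- The cyclic graph `C_n` on the vertex set `Fin n`. -/
def cycleGraph (n : ℕ) : FGraph (Fin n) where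
  verts := Finset.univ
  Adj a b := a ≠ b ∧ ((a.val + 1) % n = b.val ∨ (b.val + 1) % n = a.val)
  symm h := ⟨h.1.symm, h.2.symm⟩
  loopless a h := h.1 rfl
  mem_of_adj _ := Finset.mem_univ _

/-- `G` is a disjoint union of cyclic graphs `C_n` with `n ≥ 4`: the vertex set splits
into pairwise disjoint pieces, edges never cross between pieces, and each piece induces
a graph isomorphic to a `C_n` with `n ≥ 4`. -/
def IsDisjointUnionOfCycles (G : FGraph V) : Prop :=
  ∃ P : Finset (Finset V),
    (∀ S ∈ P, ↑S ⊆ G.verts) ∧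
    (∀ S ∈ P, ∀ T ∈ P, S ≠ T → Disjoint S T) ∧
    (∀ v ∈ G.verts, ∃ S ∈ P, v ∈ S) ∧
    (∀ a b, G.Adj a b → ∀ S ∈ P, a ∈ S → b ∈ S) ∧
    (∀ S ∈ P, ∃ n, 4 ≤ n ∧ Iso (G.induce (· ∈ S)) (cycleGraph n))

/-- Poincaré–Hopf index `i_f(v) = 1 - χ(S^-_f(v))`. -/
noncomputable def pindex (G : FGraph V) (f : V → ℝ) (v : V) : ℤ :=
  1 - ((G.unitSphere v).induce (fun w => f w < f v)).euler

/-- Curvature `K(v) = Σ_{k ≥ 0} (-1)^k f_{k-1}(S(v))/(k+1)` with `f_{-1} = 1`. -/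
noncomputable def curvature (G : FGraph V) (v : V) : ℝ :=
  ∑ k ∈ Finset.range (G.verts.card + 1),
    (-1 : ℝ) ^ k * (if k = 0 then 1 else ((G.unitSphere v).numSimplices k : ℝ)) / (k + 1)

end FGraph

/-- `sign(a + i b) = sign(a) + i sign(b)`. -/
noncomputable def csgn (z : ℂ) : ℂ :=
  ⟨Real.sign z.re, Real.sign z.im⟩

/-- The set `U = {1+i, 1-i, -1+i, -1-i}` of possible values of `csgn`. -/
noncomputable def signU : Finset ℂ :=
  {1 + Complex.I, 1 - Complex.I, -1 + Complex.I, -1 - Complex.I}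

namespace FGraph

variable {V : Type}

/-- The set of values of `sign(ψ - c)` attained on the finite vertex set `x`. -/
noncomputable def signValues (ψ : V → ℂ) (c : ℂ) (x : Finset V) : Finset ℂ :=
  x.image (fun v => csgn (ψ v - c))

/-- The level set `{ψ = c}` of a complex-valued function: the subgraph of the Barycentric
refinement induced by the simplices on which `sign(ψ - c)` takes at least three distinct
values, including `-1+i` and `1-i`. -/
noncomputable def complexLevelSet (G : FGraph V) (ψ : V → ℂ) (c : ℂ) : FGraph (Finset V) :=
  G.barycentric.induce (fun x =>
    3 ≤ (signValues ψ c x).card ∧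
    (-1 + Complex.I) ∈ signValues ψ c x ∧ (1 - Complex.I) ∈ signValues ψ c x)

/-- The level set `{ψ = 0}_e` for a two-element subset `e ⊆ U`: the subgraph of the
Barycentric refinement induced by the simplices on which `sign(ψ)` attains both values
of `e` and at least three distinct values in total. -/
noncomputable def complexLevelSetE (G : FGraph V) (ψ : V → ℂ) (e : Finset ℂ) :
    FGraph (Finset V) :=
  G.barycentric.induce (fun x =>
    (∀ u ∈ e, u ∈ signValues ψ 0 x) ∧ 3 ≤ (signValues ψ 0 x).card)

/-- `Ψ^{-1}(t)`: the subgraph of the Barycentric refinement induced by the simplices on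
which `sign(ψ)` attains all values of `t`. -/
noncomputable def signPreimage (G : FGraph V) (ψ : V → ℂ) (t : Finset ℂ) :
    FGraph (Finset V) :=
  G.barycentric.induce (fun x => ∀ u ∈ t, u ∈ signValues ψ 0 x)

/-- The sign vectors of `F - c` attained on the finite vertex set `x`. -/
noncomputable def vecSignValues {k : ℕ} (F : V → Fin k → ℝ) (c : Fin k → ℝ)
    (x : Finset V) : Finset (Fin k → ℝ) :=
  x.image (fun v j => Real.sign (F v j - c j))

/-- The level set `{F = c}` of an `ℝ^k`-valued function: the subgraph of the Barycentric
refinement induced by the simplices on which the sign vector of `F - c` takes at least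
`k+1` distinct values, including the `k` vectors `(1,…,1,-1,1,…,1)`. -/
noncomputable def vecLevelSet (G : FGraph V) {k : ℕ} (F : V → Fin k → ℝ) (c : Fin k → ℝ) :
    FGraph (Finset V) :=
  G.barycentric.induce (fun x =>
    k + 1 ≤ (vecSignValues F c x).card ∧
    ∀ j : Fin k, (fun i => if i = j then (-1 : ℝ) else 1) ∈ vecSignValues F c x)

end FGraph

/-- The complete graph on `Fin n`. -/
def completeFGraph (n : ℕ) : FGraph (Fin n) where
  verts := Finset.univ
  Adj a b := a ≠ b
  symm h := h.symm
  loopless a h := h rfl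
  mem_of_adj _ := Finset.mem_univ _

/-- Stirling numbers of the second kind. -/
def stirling2 : ℕ → ℕ → ℕ
  | 0, 0 => 1
  | 0, _ + 1 => 0
  | _ + 1, 0 => 0
  | n + 1, m + 1 => (m + 1) * stirling2 n (m + 1) + stirling2 n m

namespace FGraph

variable {V W : Type}

-- ### auxiliary development

/-- The finset of simplices of a graph. -/
noncomputable def simplices (G : FGraph V) : Finset (Finset V) :=
  G.verts.powerset.filter G.IsSimplex

lemma mem_simplices {G : FGraph V} {y : Finset V} :
    y ∈ G.simplices ↔ G.IsSimplex y := by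
  simp only [simplices, Finset.mem_filter, Finset.mem_powerset, and_iff_right_iff_imp]
  intro h
  exact fun a ha => h.2.1 ha

lemma card_le_of_mem_simplices {G : FGraph V} {y : Finset V} (h : y ∈ G.simplices) :
    1 ≤ y.card ∧ y.card ≤ G.verts.card := by
  rw [mem_simplices] at h
  constructor
  · exact Finset.card_pos.mpr h.1
  · exact Finset.card_le_card (fun a ha => h.2.1 ha)

lemma euler_eq_sum (G : FGraph V) :
    G.euler = ∑ y ∈ G.simplices, (-1 : ℤ) ^ (y.card + 1) := by
  have h1 : ∀ k : ℕ, (G.numSimplices (k+1) : ℤ) =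
      ∑ y ∈ G.simplices, (if y.card = k + 1 then 1 else 0) := by
    intro k
    rw [numSimplices]
    have he : (Finset.filter (fun x => G.IsSimplex x ∧ x.card = k+1) G.verts.powerset)
        = G.simplices.filter (fun y => y.card = k+1) := by
      ext y; simp [simplices, Finset.mem_filter, and_assoc]
    rw [he, Finset.sum_ite, Finset.sum_const, Finset.sum_const]
    simp
  unfold euler
  simp_rw [h1, Finset.mul_sum]
  rw [Finset.sum_comm]
  apply Finset.sum_congr rfl
  intro y hy
  obtain ⟨h1c, h2c⟩ := card_le_of_mem_simplices hy
  obtain ⟨k, hk⟩ : ∃ k, y.card = k + 1 := ⟨y.card - 1, by omega⟩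
  rw [Finset.sum_eq_single k]
  · rw [if_pos hk, mul_one, hk]
    rw [pow_succ, pow_succ]
    ring
  · intro b _ hb
    rw [if_neg (by omega), mul_zero]
  · intro hks
    exfalso
    exact hks (Finset.mem_range.mpr (by omega))

end FGraph

namespace FGraph
variable {V W : Type}

lemma mem_induce_verts {G : FGraph V} {P : V → Prop} {a : V} :
    a ∈ (G.induce P).verts ↔ a ∈ G.verts ∧ P a := by
  simp [induce]

lemma coe_subset_verts {s : Finset V} {t : Finset V} :
    (↑s : Set V) ⊆ ↑t ↔ ∀ a ∈ s, a ∈ t := by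
  simp [Set.subset_def]

lemma isSimplex_iff {G : FGraph V} {y : Finset V} :
    G.IsSimplex y ↔ y.Nonempty ∧ (∀ a ∈ y, a ∈ G.verts) ∧
      ∀ a ∈ y, ∀ b ∈ y, a ≠ b → G.Adj a b := by
  unfold IsSimplex
  rw [Finset.subset_iff]

lemma isSimplex_induce {G : FGraph V} {P : V → Prop} {y : Finset V} :
    (G.induce P).IsSimplex y ↔ G.IsSimplex y ∧ ∀ a ∈ y, P a := by
  simp only [isSimplex_iff, mem_induce_verts]
  constructor
  · rintro ⟨h1, h2, h3⟩
    exact ⟨⟨h1, fun a ha => (h2 a ha).1, fun a ha b hb hab => (h3 a ha b hb hab).1⟩,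
      fun a ha => (h2 a ha).2⟩
  · rintro ⟨⟨h1, h2, h3⟩, hP⟩
    exact ⟨h1, fun a ha => ⟨h2 a ha, hP a ha⟩,
      fun a ha b hb hab => ⟨h3 a ha b hb hab, hP a ha, hP b hb⟩⟩

lemma simplices_erase (G : FGraph V) (v : V) :
    (G.erase v).simplices = G.simplices.filter (fun y => v ∉ y) := by
  ext y
  simp only [mem_simplices, Finset.mem_filter, erase, isSimplex_induce]
  constructor
  · rintro ⟨h1, h2⟩
    exact ⟨h1, fun hv => h2 v hv rfl⟩
  · rintro ⟨h1, h2⟩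
    exact ⟨h1, fun a ha hav => h2 (hav ▸ ha)⟩

lemma mem_unitSphere_verts {G : FGraph V} {v a : V} :
    a ∈ (G.unitSphere v).verts ↔ a ∈ G.verts ∧ G.Adj v a := by
  simp [unitSphere, induce]

lemma not_mem_unitSphere_verts (G : FGraph V) (v : V) : v ∉ (G.unitSphere v).verts := by
  rw [mem_unitSphere_verts]
  rintro ⟨-, h⟩
  exact G.loopless v h

lemma not_mem_of_mem_simplices_unitSphere {G : FGraph V} {v : V} {z : Finset V}
    (hz : z ∈ (G.unitSphere v).simplices) : v ∉ z := by
  intro hv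
  exact not_mem_unitSphere_verts G v ((isSimplex_iff.mp (mem_simplices.mp hz)).2.1 v hv)

lemma euler_erase (G : FGraph V) (v : V) (hv : v ∈ G.verts) :
    G.euler = (G.erase v).euler + 1 - (G.unitSphere v).euler := by
  rw [euler_eq_sum, euler_eq_sum, euler_eq_sum]
  have hsplit : G.simplices = (G.simplices.filter (fun y => v ∉ y)) ∪
      (G.simplices.filter (fun y => v ∈ y)) := by
    rw [← Finset.filter_or]
    simp [em']
  rw [hsplit, Finset.sum_union (by
    apply Finset.disjoint_filter_filter'
    exact disjoint_compl_left)]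
  rw [← simplices_erase]
  have key : ∑ y ∈ G.simplices.filter (fun y => v ∈ y), (-1:ℤ)^(y.card+1)
      = 1 - ∑ z ∈ (G.unitSphere v).simplices, (-1:ℤ)^(z.card+1) := by
    have hb : ∑ y ∈ G.simplices.filter (fun y => v ∈ y), (-1:ℤ)^(y.card+1)
        = ∑ z ∈ insert ∅ (G.unitSphere v).simplices, (-1:ℤ)^z.card := by
      apply Finset.sum_nbij' (fun y => y.erase v) (fun z => insert v z)
      · intro y hy
        rw [Finset.mem_filter, mem_simplices, isSimplex_iff] at hy
        obtain ⟨⟨-, hsub, hadj⟩, hvy⟩ := hy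
        rcases Finset.eq_empty_or_nonempty (y.erase v) with he | hne
        · simp [he]
        · rw [Finset.mem_insert, mem_simplices, isSimplex_iff]
          right
          refine ⟨hne, ?_, ?_⟩
          · intro a ha
            rw [Finset.mem_erase] at ha
            rw [mem_unitSphere_verts]
            exact ⟨hsub a ha.2, hadj v hvy a ha.2 (Ne.symm ha.1)⟩
          · intro a ha b hb hab
            rw [Finset.mem_erase] at ha hb
            refine ⟨hadj a ha.2 b hb.2 hab, ?_, ?_⟩
            · exact hadj v hvy a ha.2 (Ne.symm ha.1)
            · exact hadj v hvy b hb.2 (Ne.symm hb.1)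
      · intro z hz
        rw [Finset.mem_insert] at hz
        rw [Finset.mem_filter, mem_simplices, isSimplex_iff]
        rcases hz with rfl | hz
        · refine ⟨⟨⟨v, by simp⟩, by simpa using hv, by simp⟩, by simp⟩
        · rw [mem_simplices, isSimplex_iff] at hz
          obtain ⟨hne, hsub, hadj⟩ := hz
          have hmem : ∀ a ∈ z, a ∈ G.verts ∧ G.Adj v a := by
            intro a ha
            exact mem_unitSphere_verts.mp (hsub a ha)
          refine ⟨⟨⟨v, by simp⟩, ?_, ?_⟩, by simp⟩
          · intro a ha
            rw [Finset.mem_insert] at ha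
            rcases ha with rfl | ha
            · exact hv
            · exact (hmem a ha).1
          · intro a ha b hb hab
            rw [Finset.mem_insert] at ha hb
            rcases ha with rfl | ha
            · rcases hb with rfl | hb
              · exact absurd rfl hab
              · exact (hmem b hb).2
            · rcases hb with rfl | hb
              · exact G.symm (hmem a ha).2
              · exact (hadj a ha b hb hab).1
      · intro y hy
        rw [Finset.mem_filter] at hy
        exact Finset.insert_erase hy.2
      · intro z hz
        rw [Finset.mem_insert] at hz
        have hvz : v ∉ z := by
          rcases hz with rfl | hz
          · simp
          · exact not_mem_of_mem_simplices_unitSphere hz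
        exact Finset.erase_insert hvz
      · intro y hy
        rw [Finset.mem_filter] at hy
        have : y.card = (y.erase v).card + 1 := by
          rw [Finset.card_erase_of_mem hy.2]
          have : 1 ≤ y.card := Finset.card_pos.mpr ⟨v, hy.2⟩
          omega
        rw [this]
        ring
    have hs : ∑ z ∈ (G.unitSphere v).simplices, (-1:ℤ)^z.card
        = - ∑ z ∈ (G.unitSphere v).simplices, (-1:ℤ)^(z.card+1) := by
      rw [← Finset.sum_neg_distrib]
      apply Finset.sum_congr rfl
      intro z _
      ring
    rw [hb, Finset.sum_insert (by
      intro h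
      exact (isSimplex_iff.mp (mem_simplices.mp h)).1.ne_empty rfl), hs]
    simp only [Finset.card_empty, pow_zero]
    ring
  rw [key]
  ring

end FGraph

namespace FGraph
variable {V W : Type}

lemma euler_of_verts_eq_empty {G : FGraph V} (h : G.verts = ∅) : G.euler = 0 := by
  unfold euler
  rw [h]
  simp

lemma contractible_euler {G : FGraph V} (h : Contractible G) : G.euler = 1 := by
  induction h with
  | single G v hv =>
    rw [euler_eq_sum]
    have : G.simplices = {{v}} := by
      ext y
      simp only [mem_simplices, isSimplex_iff, Finset.mem_singleton, hv]
      rw [Finset.eq_singleton_iff_nonempty_unique_mem]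
      constructor
      · rintro ⟨h1, h2, -⟩
        exact ⟨h1, fun a ha => by simpa using h2 a ha⟩
      · rintro ⟨h1, h2⟩
        exact ⟨h1, fun a ha => by simp [h2 a ha], by
          intro a ha b hb hab
          exact absurd ((h2 a ha).trans (h2 b hb).symm) hab⟩
    rw [this]
    simp
  | step G v hv h1 h2 ih1 ih2 =>
    rw [euler_erase G v hv, ih1, ih2]
    ring

lemma sphere_euler_aux : ∀ (n : ℕ) (H : FGraph W) (k : ℤ), H.verts.card ≤ n →
    IsSphere k H → H.euler = if Even k then 2 else 0 := by
  intro n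
  induction n with
  | zero =>
    intro H k hc hS
    cases hS
    case empty h =>
      rw [euler_of_verts_eq_empty h]
      simp [Int.even_iff]
    case punctured v hv hc' hm =>
      exfalso
      have := Finset.card_pos.mpr ⟨v, hv⟩
      omega
  | succ n ih =>
    intro H k hc hS
    cases hS
    case empty h =>
      rw [euler_of_verts_eq_empty h]
      simp [Int.even_iff]
    case punctured v hv hc' hm =>
      have hS' : IsSphere (k-1) (H.unitSphere v) := by
        cases hm
        next a b => exact b v hv
      have hcard : (H.unitSphere v).verts.card ≤ n := by
        have hsub : (H.unitSphere v).verts ⊆ H.verts.erase v := by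
          intro a ha
          rw [mem_unitSphere_verts] at ha
          rw [Finset.mem_erase]
          refine ⟨?_, ha.1⟩
          rintro rfl
          exact H.loopless _ ha.2
        have := Finset.card_le_card hsub
        rw [Finset.card_erase_of_mem hv] at this
        have hpos := Finset.card_pos.mpr ⟨v, hv⟩
        omega
      rw [euler_erase H v hv, contractible_euler hc', ih _ _ hcard hS']
      have hpar : Even (k - 1) ↔ ¬ Even k := Int.even_sub_one
      by_cases hE : Even k
      · rw [if_pos hE, if_neg (by rw [hpar]; simp [hE])]
        ring
      · rw [if_neg hE, if_pos (hpar.mpr hE)]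
        ring

lemma sphere_euler {H : FGraph W} {k : ℤ} (hS : IsSphere k H) :
    H.euler = if Even k then 2 else 0 :=
  sphere_euler_aux H.verts.card H k le_rfl hS

end FGraph

namespace FGraph
variable {V W : Type}

/-- Chains in a family of finsets: nonempty subsets that are totally ordered by `⊂`. -/
noncomputable def chains (Q : Finset (Finset V)) : Finset (Finset (Finset V)) :=
  Q.powerset.filter (fun w => w.Nonempty ∧ ∀ a ∈ w, ∀ b ∈ w, a ≠ b → a ⊂ b ∨ b ⊂ a)

/-- Chains whose maximum is `y`. -/
noncomputable def chainsMax (Q : Finset (Finset V)) (y : Finset V) :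
    Finset (Finset (Finset V)) :=
  (chains Q).filter (fun w => y ∈ w ∧ ∀ u ∈ w, u ⊆ y)

lemma chain_exists_max {w : Finset (Finset V)} (hne : w.Nonempty)
    (hch : ∀ a ∈ w, ∀ b ∈ w, a ≠ b → a ⊂ b ∨ b ⊂ a) :
    ∃ y ∈ w, ∀ u ∈ w, u ⊆ y := by
  obtain ⟨y, hy, hmax⟩ := Finset.exists_max_image w Finset.card hne
  refine ⟨y, hy, fun u hu => ?_⟩
  rcases eq_or_ne u y with rfl | hne'
  · exact subset_rfl
  · rcases hch u hu y hy hne' with h | h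
    · exact h.subset
    · exact absurd (Finset.card_lt_card h) (by have := hmax u hu; omega)

lemma chainsMax_pairwiseDisjoint (Q : Finset (Finset V)) (s : Finset (Finset V)) :
    (↑s : Set (Finset V)).PairwiseDisjoint (chainsMax Q) := by
  intro y _ y' _ hne
  rw [Function.onFun, Finset.disjoint_left]
  intro w hw hw'
  unfold chainsMax at hw hw'
  rw [Finset.mem_filter] at hw hw'
  exact hne (Finset.Subset.antisymm (hw'.2.2 y hw.2.1) (hw.2.2 y' hw'.2.1))

/-- Chains (possibly empty) all of whose elements are strictly below `y`. -/
noncomputable def below (Q : Finset (Finset V)) (y : Finset V) :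
    Finset (Finset (Finset V)) :=
  (Q.filter (· ⊂ y)).powerset.filter (fun w => ∀ a ∈ w, ∀ b ∈ w, a ≠ b → a ⊂ b ∨ b ⊂ a)

lemma chainsMax_sum (Q : Finset (Finset V))
    (hQ : ∀ y ∈ Q, ∑ z ∈ Q.filter (· ⊆ y), (-1:ℤ)^z.card = 1) :
    ∀ (y : Finset V), y ∈ Q →
      ∑ w ∈ chainsMax Q y, (-1:ℤ)^(w.card+1) = (-1:ℤ)^y.card := by
  intro y
  induction y using Finset.strongInduction with
  | _ y ih =>
  intro hyQ
  have hbij : ∑ w ∈ chainsMax Q y, (-1:ℤ)^(w.card+1)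
      = ∑ w' ∈ below Q y, (-1:ℤ)^w'.card := by
    apply Finset.sum_nbij' (fun w => w.erase y) (fun w' => insert y w')
    · intro w hw
      unfold chainsMax chains at hw
      rw [Finset.mem_filter, Finset.mem_filter, Finset.mem_powerset] at hw
      obtain ⟨⟨hsub, -, hch⟩, hyw, hmax⟩ := hw
      unfold below
      rw [Finset.mem_filter, Finset.mem_powerset]
      constructor
      · intro u hu
        rw [Finset.mem_erase] at hu
        rw [Finset.mem_filter]
        exact ⟨hsub hu.2, (hmax u hu.2).ssubset_of_ne hu.1⟩
      · intro a ha b hb hab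
        rw [Finset.mem_erase] at ha hb
        exact hch a ha.2 b hb.2 hab
    · intro w' hw'
      unfold below at hw'
      rw [Finset.mem_filter, Finset.mem_powerset] at hw'
      obtain ⟨hsub, hch⟩ := hw'
      have hsub' : ∀ u ∈ w', u ∈ Q ∧ u ⊂ y := by
        intro u hu
        have := hsub hu
        rw [Finset.mem_filter] at this
        exact this
      unfold chainsMax chains
      rw [Finset.mem_filter, Finset.mem_filter, Finset.mem_powerset]
      refine ⟨⟨?_, ⟨y, by simp⟩, ?_⟩, by simp, ?_⟩
      · intro u hu
        rw [Finset.mem_insert] at hu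
        rcases hu with rfl | hu
        · exact hyQ
        · exact (hsub' u hu).1
      · intro a ha b hb hab
        rw [Finset.mem_insert] at ha hb
        rcases ha with rfl | ha
        · rcases hb with rfl | hb
          · exact absurd rfl hab
          · exact Or.inr (hsub' b hb).2
        · rcases hb with rfl | hb
          · exact Or.inl (hsub' a ha).2
          · exact hch a ha b hb hab
      · intro u hu
        rw [Finset.mem_insert] at hu
        rcases hu with rfl | hu
        · exact subset_rfl
        · exact (hsub' u hu).2.subset
    · intro w hw
      unfold chainsMax at hw
      rw [Finset.mem_filter] at hw
      exact Finset.insert_erase hw.2.1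
    · intro w' hw'
      unfold below at hw'
      rw [Finset.mem_filter, Finset.mem_powerset] at hw'
      apply Finset.erase_insert
      intro hyw'
      have := hw'.1 hyw'
      rw [Finset.mem_filter] at this
      exact ssubset_irrefl y this.2
    · intro w hw
      unfold chainsMax at hw
      rw [Finset.mem_filter] at hw
      have hcard : w.card = (w.erase y).card + 1 := by
        rw [Finset.card_erase_of_mem hw.2.1]
        have : 1 ≤ w.card := Finset.card_pos.mpr ⟨y, hw.2.1⟩
        omega
      rw [hcard]
      ring
  have hmemE : ∅ ∈ below Q y := by
    unfold below
    rw [Finset.mem_filter, Finset.mem_powerset]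
    exact ⟨Finset.empty_subset _, by simp⟩
  have hsplit : ∑ w' ∈ below Q y, (-1:ℤ)^w'.card
      = 1 + ∑ w' ∈ (below Q y).erase ∅, (-1:ℤ)^w'.card := by
    rw [← Finset.add_sum_erase _ _ hmemE]
    simp
  have hbiUnion : (below Q y).erase ∅ = (Q.filter (· ⊂ y)).biUnion (chainsMax Q) := by
    ext w
    rw [Finset.mem_erase, Finset.mem_biUnion]
    constructor
    · rintro ⟨hne, hw⟩
      unfold below at hw
      rw [Finset.mem_filter, Finset.mem_powerset] at hw
      obtain ⟨hsub, hch⟩ := hw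
      obtain ⟨z, hzw, hzmax⟩ := chain_exists_max (Finset.nonempty_iff_ne_empty.mpr hne) hch
      have hz := hsub hzw
      rw [Finset.mem_filter] at hz
      refine ⟨z, Finset.mem_filter.mpr hz, ?_⟩
      unfold chainsMax chains
      rw [Finset.mem_filter, Finset.mem_filter, Finset.mem_powerset]
      refine ⟨⟨?_, Finset.nonempty_iff_ne_empty.mpr hne, hch⟩, hzw, hzmax⟩
      intro u hu
      have := hsub hu
      rw [Finset.mem_filter] at this
      exact this.1
    · rintro ⟨z, hz, hw⟩
      rw [Finset.mem_filter] at hz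
      unfold chainsMax chains at hw
      rw [Finset.mem_filter, Finset.mem_filter, Finset.mem_powerset] at hw
      obtain ⟨⟨hsub, hne, hch⟩, hzw, hzmax⟩ := hw
      refine ⟨hne.ne_empty, ?_⟩
      unfold below
      rw [Finset.mem_filter, Finset.mem_powerset]
      refine ⟨?_, hch⟩
      intro u hu
      rw [Finset.mem_filter]
      exact ⟨hsub hu, lt_of_le_of_lt (hzmax u hu) hz.2⟩
  have hinner : ∑ w' ∈ (below Q y).erase ∅, (-1:ℤ)^w'.card
      = ∑ z ∈ Q.filter (· ⊂ y), (-(-1:ℤ)^z.card) := by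
    rw [hbiUnion, Finset.sum_biUnion (chainsMax_pairwiseDisjoint Q _)]
    apply Finset.sum_congr rfl
    intro z hz
    rw [Finset.mem_filter] at hz
    have hzsum := ih z hz.2 hz.1
    have : ∑ w ∈ chainsMax Q z, (-1:ℤ)^w.card
        = - ∑ w ∈ chainsMax Q z, (-1:ℤ)^(w.card+1) := by
      rw [← Finset.sum_neg_distrib]
      apply Finset.sum_congr rfl
      intro w _
      ring
    rw [this, hzsum]
  have hQsplit : ∑ z ∈ Q.filter (· ⊂ y), (-1:ℤ)^z.card = 1 - (-1:ℤ)^y.card := by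
    have h1 : Q.filter (· ⊆ y) = insert y (Q.filter (· ⊂ y)) := by
      ext z
      rw [Finset.mem_insert, Finset.mem_filter, Finset.mem_filter]
      constructor
      · rintro ⟨hz, hsub⟩
        rcases eq_or_ne z y with rfl | hne
        · exact Or.inl rfl
        · exact Or.inr ⟨hz, hsub.ssubset_of_ne hne⟩
      · rintro (rfl | ⟨hz, hsub⟩)
        · exact ⟨hyQ, le_rfl⟩
        · exact ⟨hz, hsub.subset⟩
    have h2 : y ∉ Q.filter (· ⊂ y) := by
      rw [Finset.mem_filter]
      rintro ⟨-, h⟩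
      exact ssubset_irrefl y h
    have := hQ y hyQ
    rw [h1, Finset.sum_insert h2] at this
    linarith
  rw [hbij, hsplit, hinner, Finset.sum_neg_distrib, hQsplit]
  ring

lemma chain_sum (Q : Finset (Finset V))
    (hQ : ∀ y ∈ Q, ∑ z ∈ Q.filter (· ⊆ y), (-1:ℤ)^z.card = 1) :
    ∑ w ∈ chains Q, (-1:ℤ)^(w.card+1) = ∑ y ∈ Q, (-1:ℤ)^y.card := by
  have hbiUnion : chains Q = Q.biUnion (chainsMax Q) := by
    ext w
    rw [Finset.mem_biUnion]
    constructor
    · intro hw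
      have hw' := hw
      unfold chains at hw'
      rw [Finset.mem_filter, Finset.mem_powerset] at hw'
      obtain ⟨hsub, hne, hch⟩ := hw'
      obtain ⟨z, hzw, hzmax⟩ := chain_exists_max hne hch
      refine ⟨z, hsub hzw, ?_⟩
      unfold chainsMax
      rw [Finset.mem_filter]
      exact ⟨hw, hzw, hzmax⟩
    · rintro ⟨z, hz, hw⟩
      unfold chainsMax at hw
      rw [Finset.mem_filter] at hw
      exact hw.1
  rw [hbiUnion, Finset.sum_biUnion (chainsMax_pairwiseDisjoint Q _)]
  apply Finset.sum_congr rfl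
  intro y hy
  exact chainsMax_sum Q hQ y hy

end FGraph

namespace FGraph
variable {V W : Type}

lemma signchange_subset_sum (y : Finset V) (p : V → Prop)
    (h1 : ∃ a ∈ y, ¬ p a) (h2 : ∃ b ∈ y, p b) :
    ∑ z ∈ y.powerset.filter (fun z => (∃ a ∈ z, ¬ p a) ∧ (∃ b ∈ z, p b)),
      (-1:ℤ)^z.card = 1 := by
  set A := y.filter (fun a => ¬ p a) with hA
  set B := y.filter p with hB
  have hAne : A ≠ ∅ := by
    obtain ⟨a, ha, hpa⟩ := h1
    exact Finset.ne_empty_of_mem (Finset.mem_filter.mpr ⟨ha, hpa⟩)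
  have hBne : B ≠ ∅ := by
    obtain ⟨b, hb, hpb⟩ := h2
    exact Finset.ne_empty_of_mem (Finset.mem_filter.mpr ⟨hb, hpb⟩)
  have hyne : y ≠ ∅ := by
    obtain ⟨b, hb, -⟩ := h2
    exact Finset.ne_empty_of_mem hb
  have htot : ∑ z ∈ y.powerset, (-1:ℤ)^z.card = 0 := by
    rw [Finset.sum_powerset_neg_one_pow_card, if_neg hyne]
  have hsplit : y.powerset = y.powerset.filter (fun z => (∃ a ∈ z, ¬ p a) ∧ (∃ b ∈ z, p b))
      ∪ y.powerset.filter (fun z => ¬((∃ a ∈ z, ¬ p a) ∧ (∃ b ∈ z, p b))) := by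
    exact (Finset.filter_union_filter_not_eq _ _).symm
  have hcompl : y.powerset.filter (fun z => ¬((∃ a ∈ z, ¬ p a) ∧ (∃ b ∈ z, p b)))
      = A.powerset ∪ B.powerset := by
    ext z
    rw [Finset.mem_filter, Finset.mem_union, Finset.mem_powerset, Finset.mem_powerset,
      Finset.mem_powerset]
    constructor
    · rintro ⟨hzy, hnc⟩
      rw [not_and_or] at hnc
      push_neg at hnc
      rcases hnc with h | h
      · right
        intro a ha
        exact Finset.mem_filter.mpr ⟨hzy ha, h a ha⟩
      · left
        intro a ha
        exact Finset.mem_filter.mpr ⟨hzy ha, h a ha⟩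
    · rintro (h | h)
      · refine ⟨h.trans (Finset.filter_subset _ _), ?_⟩
        rintro ⟨-, b, hb, hpb⟩
        exact (Finset.mem_filter.mp (h hb)).2 hpb
      · refine ⟨h.trans (Finset.filter_subset _ _), ?_⟩
        rintro ⟨⟨a, ha, hpa⟩, -⟩
        exact hpa (Finset.mem_filter.mp (h ha)).2
  have hAB : A.powerset ∩ B.powerset = {∅} := by
    ext z
    rw [Finset.mem_inter, Finset.mem_powerset, Finset.mem_powerset, Finset.mem_singleton]
    constructor
    · rintro ⟨hzA, hzB⟩
      rw [Finset.eq_empty_iff_forall_notMem]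
      intro a ha
      exact (Finset.mem_filter.mp (hzA ha)).2 (Finset.mem_filter.mp (hzB ha)).2
    · rintro rfl
      exact ⟨Finset.empty_subset _, Finset.empty_subset _⟩
  have hsumU : ∑ z ∈ A.powerset ∪ B.powerset, (-1:ℤ)^z.card = -1 := by
    have := Finset.sum_union_inter (s₁ := A.powerset) (s₂ := B.powerset)
      (f := fun z => (-1:ℤ)^z.card)
    rw [hAB] at this
    rw [Finset.sum_powerset_neg_one_pow_card, Finset.sum_powerset_neg_one_pow_card,
      if_neg hAne, if_neg hBne] at this
    simp only [Finset.sum_singleton, Finset.card_empty, pow_zero] at this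
    linarith
  have hdisj : Disjoint (y.powerset.filter (fun z => (∃ a ∈ z, ¬ p a) ∧ (∃ b ∈ z, p b)))
      (y.powerset.filter (fun z => ¬((∃ a ∈ z, ¬ p a) ∧ (∃ b ∈ z, p b)))) := by
    apply Finset.disjoint_filter_filter'
    exact disjoint_compl_right
  have := htot
  rw [hsplit, Finset.sum_union hdisj, hcompl, hsumU] at this
  linarith

lemma euler_levelSet (S : FGraph V) (f : V → ℝ) (c : ℝ)
    (hf : ∀ a ∈ S.verts, f a - c ≠ 0) :
    (S.levelSet f c).euler =
      ∑ y ∈ S.simplices.filter (fun y => (∃ a ∈ y, f a - c < 0) ∧ (∃ b ∈ y, 0 < f b - c)),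
        (-1:ℤ)^y.card := by
  set P : Finset V → Prop := fun y => (∃ a ∈ y, f a - c < 0) ∧ (∃ b ∈ y, 0 < f b - c) with hP
  set Q := S.simplices.filter P with hQdef
  have hsimpl : (S.levelSet f c).simplices = chains Q := by
    ext w
    rw [mem_simplices]
    unfold levelSet
    rw [isSimplex_induce, isSimplex_iff]
    unfold chains
    rw [Finset.mem_filter, Finset.mem_powerset]
    constructor
    · rintro ⟨⟨hne, hmem, hadj⟩, hPw⟩
      refine ⟨?_, hne, ?_⟩
      · intro u hu
        rw [hQdef, Finset.mem_filter, mem_simplices]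
        have := hmem u hu
        unfold barycentric at this
        rw [Finset.mem_filter] at this
        exact ⟨this.2, hPw u hu⟩
      · intro a ha b hb hab
        exact (hadj a ha b hb hab).2.2
    · rintro ⟨hsub, hne, hch⟩
      have hmem : ∀ u ∈ w, S.IsSimplex u ∧ P u := by
        intro u hu
        have := hsub hu
        rw [hQdef, Finset.mem_filter, mem_simplices] at this
        exact this
      refine ⟨⟨hne, ?_, ?_⟩, fun u hu => (hmem u hu).2⟩
      · intro u hu
        unfold barycentric
        rw [Finset.mem_filter, Finset.mem_powerset]
        exact ⟨fun a ha => (hmem u hu).1.2.1 ha, (hmem u hu).1⟩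
      · intro a ha b hb hab
        show S.IsSimplex a ∧ S.IsSimplex b ∧ (a ⊂ b ∨ b ⊂ a)
        exact ⟨(hmem a ha).1, (hmem b hb).1, hch a ha b hb hab⟩
  rw [euler_eq_sum, hsimpl]
  apply chain_sum
  intro y hyQ
  rw [hQdef, Finset.mem_filter, mem_simplices] at hyQ
  obtain ⟨hysimp, hyP⟩ := hyQ
  have hfilter : Q.filter (· ⊆ y) = y.powerset.filter P := by
    ext z
    rw [Finset.mem_filter, hQdef, Finset.mem_filter, mem_simplices, Finset.mem_filter,
      Finset.mem_powerset]
    constructor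
    · rintro ⟨⟨hs, hp⟩, hzy⟩
      exact ⟨hzy, hp⟩
    · rintro ⟨hzy, hp⟩
      refine ⟨⟨?_, hp⟩, hzy⟩
      rw [isSimplex_iff] at hysimp ⊢
      obtain ⟨-, hsub, hadj⟩ := hysimp
      refine ⟨?_, fun a ha => hsub a (hzy ha), fun a ha b hb hab => hadj a (hzy ha) b (hzy hb) hab⟩
      obtain ⟨a, ha, -⟩ := hp.1
      exact ⟨a, ha⟩
  rw [hfilter]
  have hps : y.powerset.filter P
      = y.powerset.filter (fun z => (∃ a ∈ z, ¬ (0 < f a - c)) ∧ (∃ b ∈ z, 0 < f b - c)) := by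
    apply Finset.filter_congr
    intro z hz
    rw [Finset.mem_powerset] at hz
    have hiff : ∀ a ∈ z, (f a - c < 0 ↔ ¬ (0 < f a - c)) := by
      intro a ha
      have hne : f a - c ≠ 0 := hf a ((isSimplex_iff.mp hysimp).2.1 a (hz ha))
      constructor
      · intro h
        linarith
      · intro h
        rcases lt_trichotomy (f a - c) 0 with h' | h' | h'
        · exact h'
        · exact absurd h' hne
        · exact absurd h' h
    rw [hP]
    simp only [eq_iff_iff]
    constructor
    · rintro ⟨⟨a, ha, hlt⟩, hb⟩
      exact ⟨⟨a, ha, (hiff a ha).mp hlt⟩, hb⟩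
    · rintro ⟨⟨a, ha, hlt⟩, hb⟩
      exact ⟨⟨a, ha, (hiff a ha).mpr hlt⟩, hb⟩
  rw [hps]
  apply signchange_subset_sum
  · obtain ⟨a, ha, hlt⟩ := hyP.1
    exact ⟨a, ha, by
      have : (f a - c < 0 ↔ ¬ (0 < f a - c)) := by
        constructor
        · intro h; linarith
        · intro h
          have hne : f a - c ≠ 0 := hf a ((isSimplex_iff.mp hysimp).2.1 a ha)
          rcases lt_trichotomy (f a - c) 0 with h' | h' | h'
          · exact h'
          · exact absurd h' hne
          · exact absurd h' h
      exact this.mp hlt⟩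
  · exact hyP.2

end FGraph

namespace FGraph

section counting
variable {V : Type} [Fintype V] [DecidableEq V]

/-- Number of bijections `V ≃ Fin |V|` placing all of `y` below `x`. -/
noncomputable def belowCount (x : V) (y : Finset V) : ℕ :=
  (Finset.univ.filter (fun e : V ≃ Fin (Fintype.card V) => ∀ a ∈ y, e a < e x)).card

lemma belowCount_mul (x : V) (y : Finset V) (hx : x ∉ y) :
    belowCount x y * (y.card + 1) = (Fintype.card V).factorial := by
  set n := Fintype.card V with hn
  set T := insert x y with hT
  set A : V → Finset (V ≃ Fin n) :=
    fun w => Finset.univ.filter (fun e => ∀ a ∈ T, a ≠ w → e a < e w) with hA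
  have hcover : (Finset.univ : Finset (V ≃ Fin n)) = T.biUnion A := by
    ext e
    simp only [Finset.mem_univ, true_iff, Finset.mem_biUnion]
    obtain ⟨w, hw, hmax⟩ := Finset.exists_max_image T (fun a => e a)
      ⟨x, Finset.mem_insert_self x y⟩
    refine ⟨w, hw, ?_⟩
    rw [hA, Finset.mem_filter]
    refine ⟨Finset.mem_univ _, fun a ha hab => ?_⟩
    exact lt_of_le_of_ne (hmax a ha) (fun h => hab (e.injective h))
  have hdisj : (↑T : Set V).PairwiseDisjoint A := by
    intro w hw w' hw' hne
    rw [Function.onFun, Finset.disjoint_left]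
    intro e he he'
    rw [hA, Finset.mem_filter] at he he'
    have h1 := he.2 w' (by simpa using hw') hne.symm
    have h2 := he'.2 w (by simpa using hw) hne
    exact absurd (h1.trans h2) (lt_irrefl _)
  have hconst : ∀ w ∈ T, (A w).card = (A x).card := by
    intro w hwT
    rcases eq_or_ne w x with rfl | hwx
    · rfl
    · apply Finset.card_nbij' (fun e => (Equiv.swap x w).trans e)
        (fun e => (Equiv.swap x w).trans e)
      · intro e he
        rw [hA, Finset.mem_coe, Finset.mem_filter] at he ⊢
        refine ⟨Finset.mem_univ _, fun a ha hax => ?_⟩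
        simp only [Equiv.trans_apply]
        rw [Equiv.swap_apply_left]
        rcases eq_or_ne a w with rfl | haw
        · rw [Equiv.swap_apply_right]
          exact he.2 x (Finset.mem_insert_self x y) (Ne.symm hax)
        · rw [Equiv.swap_apply_of_ne_of_ne hax haw]
          exact he.2 a ha haw
      · intro e he
        rw [hA, Finset.mem_coe, Finset.mem_filter] at he ⊢
        refine ⟨Finset.mem_univ _, fun a ha haw => ?_⟩
        simp only [Equiv.trans_apply]
        rw [Equiv.swap_apply_right]
        rcases eq_or_ne a x with rfl | hax
        · rw [Equiv.swap_apply_left]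
          exact he.2 w hwT hwx
        · rw [Equiv.swap_apply_of_ne_of_ne hax haw]
          exact he.2 a ha hax
      · intro e _
        ext a
        simp [Equiv.swap_apply_self]
      · intro e _
        ext a
        simp [Equiv.swap_apply_self]
  have hcardT : T.card = y.card + 1 := Finset.card_insert_of_notMem hx
  have hfact : (Finset.univ : Finset (V ≃ Fin n)).card = n.factorial := by
    rw [Finset.card_univ, Fintype.card_equiv (Fintype.equivFin V)]
  have hsum : (Finset.univ : Finset (V ≃ Fin n)).card = ∑ w ∈ T, (A w).card := by
    rw [hcover, Finset.card_biUnion]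
    intro w hw w' hw' hne
    exact hdisj hw hw' hne
  have hAx : A x = Finset.univ.filter (fun e : V ≃ Fin n => ∀ a ∈ y, e a < e x) := by
    apply Finset.filter_congr
    intro e _
    constructor
    · intro h a ha
      exact h a (Finset.mem_insert_of_mem ha) (fun hax => hx (hax ▸ ha))
    · intro h a ha hax
      rcases Finset.mem_insert.mp ha with rfl | ha'
      · exact absurd rfl hax
      · exact h a ha'
  have : ∑ w ∈ T, (A w).card = (y.card + 1) * (A x).card := by
    rw [Finset.sum_congr rfl hconst, Finset.sum_const, hcardT, smul_eq_mul]
  rw [this, hAx] at hsum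
  unfold belowCount
  rw [← hn, ← hfact, hsum]
  ring

lemma aboveCount_eq (x : V) (y : Finset V) :
    (Finset.univ.filter (fun e : V ≃ Fin (Fintype.card V) => ∀ a ∈ y, e x < e a)).card
      = belowCount x y := by
  unfold belowCount
  apply Finset.card_nbij' (fun e => e.trans Fin.revPerm) (fun e => e.trans Fin.revPerm)
  · intro e he
    rw [Finset.mem_coe, Finset.mem_filter] at he ⊢
    refine ⟨Finset.mem_univ _, fun a ha => ?_⟩
    simp only [Equiv.trans_apply, Fin.revPerm_apply]
    exact Fin.rev_lt_rev.mpr (he.2 a ha)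
  · intro e he
    rw [Finset.mem_coe, Finset.mem_filter] at he ⊢
    refine ⟨Finset.mem_univ _, fun a ha => ?_⟩
    simp only [Equiv.trans_apply, Fin.revPerm_apply]
    exact Fin.rev_lt_rev.mpr (he.2 a ha)
  · intro e _
    ext a
    simp [Fin.rev_rev]
  · intro e _
    ext a
    simp [Fin.rev_rev]

lemma sc_count (x : V) (y : Finset V) (hx : x ∉ y) (hne : y.Nonempty) :
    (Finset.univ.filter (fun e : V ≃ Fin (Fintype.card V) =>
        (∃ a ∈ y, e a < e x) ∧ (∃ b ∈ y, e x < e b))).card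
      + 2 * belowCount x y = (Fintype.card V).factorial := by
  set n := Fintype.card V with hn
  set SC : (V ≃ Fin n) → Prop :=
    fun e => (∃ a ∈ y, e a < e x) ∧ (∃ b ∈ y, e x < e b) with hSC
  set AB : (V ≃ Fin n) → Prop := fun e => ∀ a ∈ y, e a < e x with hAB
  set AA : (V ≃ Fin n) → Prop := fun e => ∀ a ∈ y, e x < e a with hAA
  have hone : ∀ e : V ≃ Fin n,
      ((if SC e then 1 else 0) + (if AB e then 1 else 0)) + (if AA e then 1 else 0) = 1 := by
    intro e
    have hax : ∀ a ∈ y, e a ≠ e x := by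
      intro a ha h
      exact hx (e.injective h ▸ ha)
    by_cases hb : AB e
    · have hnsc : ¬ SC e := by
        rintro ⟨-, b, hby, hbx⟩
        exact absurd (hb b hby) (not_lt.mpr hbx.le)
      have hna : ¬ AA e := by
        intro h
        obtain ⟨a, ha⟩ := hne
        exact absurd (hb a ha) (not_lt.mpr (h a ha).le)
      rw [if_neg hnsc, if_pos hb, if_neg hna]
    · have hex : ∃ b ∈ y, e x < e b := by
        have hb' : ∃ b ∈ y, ¬ e b < e x := by
          by_contra hc
          push_neg at hc
          exact hb hc
        obtain ⟨b, hby, hbx⟩ := hb'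
        exact ⟨b, hby, lt_of_le_of_ne (not_lt.mp hbx) (Ne.symm (hax b hby))⟩
      by_cases ha : AA e
      · have hnsc : ¬ SC e := by
          rintro ⟨⟨a, hay, halt⟩, -⟩
          exact absurd (ha a hay) (not_lt.mpr halt.le)
        rw [if_neg hnsc, if_neg hb, if_pos ha]
      · have hsc : SC e := by
          refine ⟨?_, hex⟩
          have ha' : ∃ a ∈ y, ¬ e x < e a := by
            by_contra hc
            push_neg at hc
            exact ha hc
          obtain ⟨a, hay, halt⟩ := ha'
          exact ⟨a, hay, lt_of_le_of_ne (not_lt.mp halt) (hax a hay)⟩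
        rw [if_pos hsc, if_neg hb, if_neg ha]
  have hfact : (Finset.univ : Finset (V ≃ Fin n)).card = n.factorial := by
    rw [Finset.card_univ, Fintype.card_equiv (Fintype.equivFin V)]
  have hsum : ∑ e : V ≃ Fin n,
      (((if SC e then 1 else 0) + (if AB e then 1 else 0)) + (if AA e then 1 else 0))
      = n.factorial := by
    rw [Finset.sum_congr rfl (fun e _ => hone e), Finset.sum_const, smul_eq_mul, mul_one,
      hfact]
  rw [Finset.sum_add_distrib, Finset.sum_add_distrib, ← Finset.card_filter,
    ← Finset.card_filter, ← Finset.card_filter] at hsum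
  have h2 := aboveCount_eq x y
  unfold belowCount at h2 ⊢
  rw [← hn] at h2 ⊢
  have e1 : Finset.filter (fun i => SC i) (Finset.univ : Finset (V ≃ Fin n)) =
      Finset.univ.filter (fun e : V ≃ Fin n => (∃ a ∈ y, e a < e x) ∧ (∃ b ∈ y, e x < e b)) :=
    Finset.filter_congr (fun e _ => Iff.rfl)
  have e2 : Finset.filter (fun i => AB i) (Finset.univ : Finset (V ≃ Fin n)) =
      Finset.univ.filter (fun e : V ≃ Fin n => ∀ a ∈ y, e a < e x) :=
    Finset.filter_congr (fun e _ => Iff.rfl)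
  have e3 : Finset.filter (fun i => AA i) (Finset.univ : Finset (V ≃ Fin n)) =
      Finset.univ.filter (fun e : V ≃ Fin n => ∀ a ∈ y, e x < e a) :=
    Finset.filter_congr (fun e _ => Iff.rfl)
  rw [e1, e2, e3, h2] at hsum
  omega

end counting
end FGraph

namespace FGraph
variable {V : Type}

lemma numSimplices_eq (G : FGraph V) (k : ℕ) :
    G.numSimplices k = (G.simplices.filter (fun y => y.card = k)).card := by
  unfold numSimplices
  congr 1
  ext y
  simp [simplices, Finset.mem_filter, and_assoc]

lemma curvature_eq (G : FGraph V) (v : V) :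
    G.curvature v = 1 + ∑ y ∈ (G.unitSphere v).simplices,
      ((-1:ℝ)^y.card / (y.card + 1)) := by
  unfold curvature
  rw [Finset.sum_range_succ']
  have h0 : ((-1:ℝ)^0 * (if 0 = 0 then (1:ℝ) else ((G.unitSphere v).numSimplices 0 : ℝ)))
      / ((0:ℕ) + 1) = 1 := by
    norm_num
  rw [h0, add_comm]
  congr 1
  have hcast : ∀ i : ℕ, (((G.unitSphere v).numSimplices (i+1) : ℝ))
      = ∑ y ∈ (G.unitSphere v).simplices, (if y.card = i+1 then (1:ℝ) else 0) := by
    intro i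
    rw [numSimplices_eq, Finset.card_filter, Nat.cast_sum]
    apply Finset.sum_congr rfl
    intro y _
    split <;> simp
  have hstep : ∀ i : ℕ, ((-1:ℝ)^(i+1)
        * (if i+1 = 0 then (1:ℝ) else ((G.unitSphere v).numSimplices (i+1) : ℝ)))
        / ((i+1 : ℕ) + 1)
      = ∑ y ∈ (G.unitSphere v).simplices,
          (if y.card = i+1 then ((-1:ℝ)^(i+1) / ((i+1:ℕ)+1)) else 0) := by
    intro i
    rw [if_neg (Nat.succ_ne_zero i), hcast i, Finset.mul_sum, Finset.sum_div]
    apply Finset.sum_congr rfl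
    intro y _
    split <;> simp
  rw [Finset.sum_congr rfl (fun i _ => hstep i), Finset.sum_comm]
  apply Finset.sum_congr rfl
  intro y hy
  have hcards := card_le_of_mem_simplices hy
  have hsub : (G.unitSphere v).verts ⊆ G.verts := Finset.filter_subset _ _
  have hle : y.card ≤ G.verts.card := le_trans hcards.2 (Finset.card_le_card hsub)
  obtain ⟨j, hj⟩ : ∃ j, y.card = j + 1 := ⟨y.card - 1, by omega⟩
  rw [Finset.sum_eq_single j (fun b _ hb => by rw [if_neg (by omega)])
    (fun hjs => absurd (Finset.mem_range.mpr (by omega)) hjs)]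
  rw [if_pos hj, hj]

end FGraph


/-- For an even-dimensional manifold, the curvature of a vertex `x` is
`K(x) = 1 - E[χ(M_f(x))]/2`, where the expectation is taken over the uniformly random
bijections `f : V → {1,…,|V|}` and `M_f(x) = {f = f(x)}` is the central surface inside
the unit sphere `S(x)`. -/
theorem curvature_index_expectation_even {V : Type} [Fintype V] [DecidableEq V]
    (G : FGraph V) (hV : G.verts = Finset.univ) (d : ℤ) (hd : Even d)
    (hG : FGraph.IsManifold d G) (x : V) :
    G.curvature x = 1 -
      ((∑ e : V ≃ Fin (Fintype.card V),
          (((G.unitSphere x).levelSet (fun v => ((e v : ℕ) : ℝ) + 1)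
              (((e x : ℕ) : ℝ) + 1)).euler : ℝ)) /
        (Nat.factorial (Fintype.card V))) / 2 := by
  have hxv : x ∈ G.verts := hV ▸ Finset.mem_univ x
  set n := Fintype.card V with hn
  set S := G.unitSphere x with hSdef
  have hxnot : ∀ {y : Finset V}, y ∈ S.simplices → x ∉ y := by
    intro y hy hxy
    exact FGraph.not_mem_unitSphere_verts G x
      ((FGraph.isSimplex_iff.mp (FGraph.mem_simplices.mp hy)).2.1 x hxy)
  have hynef : ∀ {y : Finset V}, y ∈ S.simplices → y.Nonempty :=
    fun hy => (FGraph.isSimplex_iff.mp (FGraph.mem_simplices.mp hy)).1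
  have hsphere : FGraph.IsSphere (d-1) S := by
    cases hG
    next hd0 h => exact h x hxv
  have hzero : ∑ y ∈ S.simplices, (-1:ℤ)^y.card = 0 := by
    have h1 := FGraph.sphere_euler hsphere
    rw [if_neg (by rw [Int.even_sub_one]; exact not_not_intro hd)] at h1
    rw [FGraph.euler_eq_sum] at h1
    have h2 : ∑ y ∈ S.simplices, (-1:ℤ)^(y.card+1)
        = - ∑ y ∈ S.simplices, (-1:ℤ)^y.card := by
      rw [← Finset.sum_neg_distrib]
      exact Finset.sum_congr rfl (fun y _ => by ring)
    rw [h2] at h1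
    linarith
  have heuler : ∀ e : V ≃ Fin n,
      ((S.levelSet (fun v => ((e v : ℕ) : ℝ) + 1) (((e x : ℕ) : ℝ) + 1)).euler : ℤ)
      = ∑ y ∈ S.simplices, (if (∃ a ∈ y, e a < e x) ∧ (∃ b ∈ y, e x < e b)
          then (-1:ℤ)^y.card else 0) := by
    intro e
    have hf : ∀ a ∈ S.verts,
        ((fun v => ((e v : ℕ) : ℝ) + 1) a) - (((e x : ℕ) : ℝ) + 1) ≠ 0 := by
      intro a ha h
      have h1 : ((e a : ℕ) : ℝ) = ((e x : ℕ) : ℝ) := by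
        simp only at h
        linarith
      have h2 : (e a : ℕ) = (e x : ℕ) := Nat.cast_injective h1
      have h3 : a = x := e.injective (Fin.val_injective h2)
      rw [h3] at ha
      exact FGraph.not_mem_unitSphere_verts G x ha
    rw [FGraph.euler_levelSet S _ _ hf, Finset.sum_filter]
    apply Finset.sum_congr rfl
    intro y hy
    have hlt : ∀ a : V, ((((e a : ℕ):ℝ)+1) - ((((e x : ℕ)):ℝ)+1) < 0) ↔ e a < e x := by
      intro a
      rw [Fin.lt_def]
      constructor
      · intro h
        exact_mod_cast (by linarith : ((e a : ℕ):ℝ) < ((e x : ℕ):ℝ))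
      · intro h
        have : ((e a : ℕ):ℝ) < ((e x : ℕ):ℝ) := by exact_mod_cast h
        linarith
    have hgt : ∀ a : V, (0 < (((e a : ℕ):ℝ)+1) - ((((e x : ℕ)):ℝ)+1)) ↔ e x < e a := by
      intro a
      rw [Fin.lt_def]
      constructor
      · intro h
        exact_mod_cast (by linarith : ((e x : ℕ):ℝ) < ((e a : ℕ):ℝ))
      · intro h
        have : ((e x : ℕ):ℝ) < ((e a : ℕ):ℝ) := by exact_mod_cast h
        linarith
    simp only [hlt, hgt]
  set Z : ℤ := ∑ e : V ≃ Fin n,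
      ((S.levelSet (fun v => ((e v : ℕ) : ℝ) + 1) (((e x : ℕ) : ℝ) + 1)).euler : ℤ)
    with hZdef
  have hZ : Z = -2 * ∑ y ∈ S.simplices, (-1:ℤ)^y.card * (FGraph.belowCount x y : ℤ) := by
    rw [hZdef, Finset.sum_congr rfl (fun e _ => heuler e), Finset.sum_comm]
    have hterm : ∀ y ∈ S.simplices,
        ∑ e : V ≃ Fin n, (if (∃ a ∈ y, e a < e x) ∧ (∃ b ∈ y, e x < e b)
            then (-1:ℤ)^y.card else 0)
        = (-1:ℤ)^y.card * ((Nat.factorial n : ℤ) - 2 * (FGraph.belowCount x y : ℤ)) := by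
      intro y hy
      rw [← Finset.sum_filter, Finset.sum_const, nsmul_eq_mul]
      have hsc := FGraph.sc_count x y (hxnot hy) (hynef hy)
      rw [← hn] at hsc
      have : ((Finset.univ.filter (fun e : V ≃ Fin n =>
          (∃ a ∈ y, e a < e x) ∧ (∃ b ∈ y, e x < e b))).card : ℤ)
          = (Nat.factorial n : ℤ) - 2 * (FGraph.belowCount x y : ℤ) := by
        omega
      rw [this]
      ring
    rw [Finset.sum_congr rfl hterm]
    have h1 : ∑ y ∈ S.simplices,
        (-1:ℤ)^y.card * ((Nat.factorial n : ℤ) - 2 * (FGraph.belowCount x y : ℤ))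
        = (∑ y ∈ S.simplices, (-1:ℤ)^y.card) * (Nat.factorial n : ℤ)
          - 2 * ∑ y ∈ S.simplices, (-1:ℤ)^y.card * (FGraph.belowCount x y : ℤ) := by
      rw [Finset.sum_mul, Finset.mul_sum, ← Finset.sum_sub_distrib]
      exact Finset.sum_congr rfl (fun y _ => by ring)
    rw [h1, hzero]
    ring
  have hcast : ∑ e : V ≃ Fin n,
      (((S.levelSet (fun v => ((e v : ℕ) : ℝ) + 1) (((e x : ℕ) : ℝ) + 1)).euler : ℝ))
      = (Z : ℝ) := by
    rw [hZdef]
    push_cast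
    rfl
  rw [FGraph.curvature_eq, hcast, hZ]
  have hFpos : (0:ℝ) < (Nat.factorial n : ℝ) := by
    exact_mod_cast Nat.factorial_pos n
  have hAB : ∑ y ∈ S.simplices, ((-1:ℝ)^y.card / (y.card + 1))
      = (∑ y ∈ S.simplices, (-1:ℝ)^y.card * (FGraph.belowCount x y : ℝ))
        / (Nat.factorial n : ℝ) := by
    rw [Finset.sum_div]
    apply Finset.sum_congr rfl
    intro y hy
    have hmul := FGraph.belowCount_mul x y (hxnot hy)
    rw [← hn] at hmul
    have hmulR : (FGraph.belowCount x y : ℝ) * ((y.card : ℝ) + 1)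
        = (Nat.factorial n : ℝ) := by
      exact_mod_cast congrArg (Nat.cast : ℕ → ℝ) hmul
    have hcpos : (0:ℝ) < (y.card : ℝ) + 1 := by positivity
    rw [div_eq_div_iff hcpos.ne' hFpos.ne', ← hmulR]
    ring
  rw [hAB]
  push_cast
  field_simp
  ring
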